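/- arXiv:2305.09028 — 2 statements merged into one kernel-verified Lean document; each statement's English description precedes it below -/
import Mathlib

section
/- Let W ∈ ℝ^{n×r}, F ∈ ℝ^{n×r}, B ∈ ℝ^{r×n}, and let A ∈ ℝ^{r×r} be invertible. Then ‖W·A·Wᵀ − F·A⁻¹·B‖₂ ≤ ‖W‖₂·‖A·Wᵀ − B‖₂ + ‖B‖₂·‖A⁻¹‖₂·‖W·A − F‖₂. -/
open Matrix

/-- The spectral norm of a real matrix: the operator norm of the induced linear
map between Euclidean spaces. -/
noncomputable def matrixSpectralNorm {m n : ℕ} (M : Matrix (Fin m) (Fin n) ℝ) : ℝ :=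
  ‖LinearMap.toContinuousLinearMap (Matrix.toEuclideanLin M)‖

open scoped Matrix.Norms.L2Operator in
lemma spectralNorm_eq_l2 {m n : ℕ} (M : Matrix (Fin m) (Fin n) ℝ) :
    matrixSpectralNorm M = ‖M‖ := (M.l2_opNorm_def).symm

/-- Alternate bound on the spectral norm of the difference between the SKI
approximation `W A Wᵀ` and the Nyström approximation `F A⁻¹ B`:
`‖W A Wᵀ - F A⁻¹ B‖₂ ≤ ‖W‖₂ ‖A Wᵀ - B‖₂ + ‖B‖₂ ‖A⁻¹‖₂ ‖W A - F‖₂`. -/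
theorem ski_nystrom_diff_bound' {n r : ℕ}
    (W F : Matrix (Fin n) (Fin r) ℝ) (B : Matrix (Fin r) (Fin n) ℝ)
    (A : Matrix (Fin r) (Fin r) ℝ) (hA : IsUnit A.det) :
    matrixSpectralNorm (W * A * Wᵀ - F * A⁻¹ * B) ≤
      matrixSpectralNorm W * matrixSpectralNorm (A * Wᵀ - B) +
        matrixSpectralNorm B * matrixSpectralNorm A⁻¹ * matrixSpectralNorm (W * A - F) := by
  open scoped Matrix.Norms.L2Operator in
  have key : W * A * Wᵀ - F * A⁻¹ * B = W * (A * Wᵀ - B) + (W * A - F) * (A⁻¹ * B) := by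
    have h1 : A * A⁻¹ = 1 := Matrix.mul_nonsing_inv A hA
    rw [Matrix.mul_sub, Matrix.sub_mul]
    rw [show W * A * (A⁻¹ * B) = W * B by rw [← Matrix.mul_assoc, Matrix.mul_assoc W A A⁻¹, h1, Matrix.mul_one]]
    rw [Matrix.mul_assoc F A⁻¹ B, ← Matrix.mul_assoc W A Wᵀ]
    abel
  simp only [spectralNorm_eq_l2, key]
  calc ‖W * (A * Wᵀ - B) + (W * A - F) * (A⁻¹ * B)‖
      ≤ ‖W * (A * Wᵀ - B)‖ + ‖(W * A - F) * (A⁻¹ * B)‖ := norm_add_le _ _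
    _ ≤ ‖W‖ * ‖A * Wᵀ - B‖ + ‖W * A - F‖ * (‖A⁻¹‖ * ‖B‖) := by
        gcongr
        · exact Matrix.l2_opNorm_mul _ _
        · exact le_trans (Matrix.l2_opNorm_mul _ _)
            (mul_le_mul_of_nonneg_left (Matrix.l2_opNorm_mul _ _) (norm_nonneg _))
    _ = ‖W‖ * ‖A * Wᵀ - B‖ + ‖B‖ * ‖A⁻¹‖ * ‖W * A - F‖ := by ring
end

section
/- Let k̂ : ℂ → ℂ be an entire function satisfying k̂(z + 2π) = k̂(z) for all z ∈ ℂ, and define the signal k : ℤ → ℂ by k[n] = (1/(2π))·∫_{−π}^{π} k̂(ω)·exp(i·ω·n) dω. Then for every a > 0 there exists a constant C ≥ 0 such that |k[n]| ≤ C·exp(−a·|n|) for all n ∈ ℤ. -/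
open scoped Real

private lemma dtft_shift_aux (khat : ℂ → ℂ) (hent : Differentiable ℂ khat)
    (hper : ∀ z : ℂ, khat (z + 2 * π) = khat z) (n : ℤ) (b : ℝ) :
    (∫ x in (-π : ℝ)..π, khat x * Complex.exp (Complex.I * x * n)) =
      Complex.exp (-(b * n)) *
        ∫ x in (-π : ℝ)..π, khat (x + b * Complex.I) * Complex.exp (Complex.I * x * n) := by
  set f : ℂ → ℂ := fun z => khat z * Complex.exp (Complex.I * z * n) with hf
  have hdf : Differentiable ℂ f := hent.mul (by fun_prop)
  have hrect := Complex.integral_boundary_rect_eq_zero_of_differentiableOn f ⟨-π, 0⟩ ⟨π, b⟩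
    hdf.differentiableOn
  have hre1 : (⟨-π, 0⟩ : ℂ).re = -π := rfl
  have him1 : (⟨-π, 0⟩ : ℂ).im = 0 := rfl
  have hre2 : (⟨π, b⟩ : ℂ).re = π := rfl
  have him2 : (⟨π, b⟩ : ℂ).im = b := rfl
  rw [hre1, him1, hre2, him2] at hrect
  have hvert : ∀ y : ℝ, f ((π : ℝ) + y * Complex.I) = f ((-π : ℝ) + y * Complex.I) := by
    intro y
    have h1 : khat ((π : ℝ) + y * Complex.I) = khat ((-π : ℝ) + y * Complex.I) := by
      have := hper ((-π : ℝ) + y * Complex.I)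
      rw [← this]; congr 1; push_cast; ring
    have h2 : Complex.exp (Complex.I * ((π : ℝ) + y * Complex.I) * n) =
        Complex.exp (Complex.I * ((-π : ℝ) + y * Complex.I) * n) := by
      rw [show (Complex.I * ((π : ℝ) + y * Complex.I) * n)
          = Complex.I * ((-π : ℝ) + y * Complex.I) * n + n * (2 * π * Complex.I) by
            push_cast; ring,
        Complex.exp_add, Complex.exp_int_mul_two_pi_mul_I, mul_one]
    simp only [hf, h1, h2]
  have hvv : (∫ y : ℝ in (0:ℝ)..b, f ((π:ℝ) + y * Complex.I)) =
      ∫ y : ℝ in (0:ℝ)..b, f ((-π:ℝ) + y * Complex.I) :=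
    intervalIntegral.integral_congr fun y _ => hvert y
  have key : (∫ x : ℝ in (-π:ℝ)..π, f ((x:ℝ) + (0:ℝ) * Complex.I)) =
      ∫ x : ℝ in (-π:ℝ)..π, f ((x:ℝ) + b * Complex.I) := by
    rw [hvv] at hrect
    linear_combination hrect
  have h0 : ∀ x : ℝ, f ((x:ℝ) + (0:ℝ) * Complex.I) = khat x * Complex.exp (Complex.I * x * n) := by
    intro x; simp [hf]
  have hb : ∀ x : ℝ, f ((x:ℝ) + b * Complex.I) =
      Complex.exp (-(b * n)) * (khat ((x:ℝ) + b * Complex.I) * Complex.exp (Complex.I * x * n)) := by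
    intro x
    simp only [hf]
    rw [show (Complex.I * ((x:ℝ) + b * Complex.I) * n)
        = Complex.I * x * n + (-(b * n) : ℂ) by ring_nf; rw [Complex.I_sq]; ring,
      Complex.exp_add]
    ring
  calc (∫ x in (-π : ℝ)..π, khat x * Complex.exp (Complex.I * x * n))
      = ∫ x : ℝ in (-π:ℝ)..π, f ((x:ℝ) + (0:ℝ) * Complex.I) :=
        intervalIntegral.integral_congr fun x _ => (h0 x).symm
    _ = ∫ x : ℝ in (-π:ℝ)..π, f ((x:ℝ) + b * Complex.I) := key
    _ = ∫ x : ℝ in (-π:ℝ)..π, Complex.exp (-(b * n)) *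
          (khat ((x:ℝ) + b * Complex.I) * Complex.exp (Complex.I * x * n)) :=
        intervalIntegral.integral_congr fun x _ => hb x
    _ = _ := intervalIntegral.integral_const_mul _ _

/-- If the DTFT `k̂` is (the restriction to ℝ of) an entire `2π`-periodic
function, then the signal `k[n] = (1/2π) ∫_{-π}^{π} k̂(ω) e^{iωn} dω` decays
faster than any exponential rate: for every `a > 0` there is `C ≥ 0` with
`|k[n]| ≤ C e^{-a|n|}` for all `n ∈ ℤ`. -/
theorem entire_dtft_signal_exponential_decay
    (khat : ℂ → ℂ) (hent : Differentiable ℂ khat)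
    (hper : ∀ z : ℂ, khat (z + 2 * π) = khat z)
    (k : ℤ → ℂ)
    (hk : ∀ n : ℤ, k n =
      (1 / (2 * π) : ℂ) *
        ∫ ω in (-π : ℝ)..π, khat ω * Complex.exp (Complex.I * ω * n)) :
    ∀ a : ℝ, 0 < a → ∃ C : ℝ, 0 ≤ C ∧
      ∀ n : ℤ, ‖k n‖ ≤ C * Real.exp (-a * |(n : ℝ)|) := by
  intro a ha
  -- bounds on the two horizontal lines at height ±a
  have hbound : ∀ b : ℝ, ∃ M : ℝ, 0 ≤ M ∧
      ∀ x ∈ Set.Icc (-π) π, ‖khat ((x:ℝ) + b * Complex.I)‖ ≤ M := by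
    intro b
    obtain ⟨M, hM⟩ := isCompact_Icc.exists_bound_of_continuousOn
      (f := fun x : ℝ => khat ((x:ℝ) + b * Complex.I))
      (Continuous.continuousOn (hent.continuous.comp (by continuity)))
    exact ⟨max M 0, le_max_right _ _, fun x hx =>
      (hM x hx).trans (le_max_left _ _)⟩
  obtain ⟨M₁, hM₁0, hM₁⟩ := hbound a
  obtain ⟨M₂, hM₂0, hM₂⟩ := hbound (-a)
  refine ⟨max M₁ M₂, le_trans hM₁0 (le_max_left _ _), fun n => ?_⟩
  -- choose b depending on sign of n
  set b : ℝ := if 0 ≤ n then a else -a with hbdef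
  have hM : ∀ x ∈ Set.Icc (-π) π, ‖khat ((x:ℝ) + b * Complex.I)‖ ≤ max M₁ M₂ := by
    intro x hx
    by_cases h : (0:ℤ) ≤ n
    · simp only [hbdef, if_pos h]; exact (hM₁ x hx).trans (le_max_left _ _)
    · simp only [hbdef, if_neg h]; exact (hM₂ x hx).trans (le_max_right _ _)
  have hbn : b * (n:ℝ) = a * |(n:ℝ)| := by
    by_cases h : (0:ℤ) ≤ n
    · simp only [hbdef, if_pos h]
      rw [abs_of_nonneg (by exact_mod_cast h)]
    · simp only [hbdef, if_neg h]
      rw [abs_of_neg (by exact_mod_cast (not_le.mp h) : ((n:ℝ) < 0))]; ring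
  have hshift := dtft_shift_aux khat hent hper n b
  -- norm of the shifted integral
  have hnormint : ‖∫ x in (-π : ℝ)..π,
      khat ((x:ℝ) + b * Complex.I) * Complex.exp (Complex.I * x * n)‖ ≤
      max M₁ M₂ * (2 * π) := by
    have := intervalIntegral.norm_integral_le_of_norm_le_const
      (C := max M₁ M₂)
      (f := fun x : ℝ => khat ((x:ℝ) + b * Complex.I) * Complex.exp (Complex.I * x * n))
      (a := (-π:ℝ)) (b := (π:ℝ)) ?_
    · calc ‖_‖ ≤ max M₁ M₂ * |π - (-π)| := this
        _ = max M₁ M₂ * (2 * π) := by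
            rw [abs_of_nonneg (by linarith [Real.pi_pos] : (0:ℝ) ≤ π - (-π))]; ring
    · intro x hx
      have hx' : x ∈ Set.Icc (-π) π := by
        rw [Set.uIoc_of_le (by linarith [Real.pi_pos] : (-π:ℝ) ≤ π)] at hx
        exact ⟨hx.1.le, hx.2⟩
      rw [norm_mul]
      have he : ‖Complex.exp (Complex.I * x * n)‖ = 1 := by
        rw [Complex.norm_exp]
        simp [Complex.mul_re, Complex.mul_im]
      rw [he, mul_one]
      exact hM x hx'
  rw [hk n, norm_mul, hshift, norm_mul]
  have habs1 : ‖(1 / (2 * π) : ℂ)‖ = 1 / (2 * π) := by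
    rw [norm_div, norm_one]
    congr 1
    rw [norm_mul, Complex.norm_two]; simp [abs_of_pos Real.pi_pos]
  have habse : ‖Complex.exp (-((b:ℂ) * (n:ℂ)))‖ = Real.exp (-a * |(n:ℝ)|) := by
    rw [Complex.norm_exp]
    congr 1
    have : (-((b:ℂ) * (n:ℂ))).re = -(b * (n:ℝ)) := by
      simp [Complex.mul_re]
    rw [this, hbn]; ring
  rw [habs1, habse]
  have hE : (0:ℝ) < Real.exp (-a * |(n:ℝ)|) := Real.exp_pos _
  have hpi : (0:ℝ) < π := Real.pi_pos
  calc 1 / (2 * π) * (Real.exp (-a * |(n:ℝ)|) *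
        ‖∫ x in (-π : ℝ)..π,
          khat ((x:ℝ) + b * Complex.I) * Complex.exp (Complex.I * x * n)‖)
      ≤ 1 / (2 * π) * (Real.exp (-a * |(n:ℝ)|) * (max M₁ M₂ * (2 * π))) := by
        gcongr
    _ = max M₁ M₂ * Real.exp (-a * |(n:ℝ)|) := by field_simp
end
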